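/- Let Γ be a closed curve and f, g continuous functions on Γ satisfying |f(z) + g(z)| < |f(z)| + |g(z)| for all z ∈ Γ. Then f and g have the same winding on Γ: V(f; Γ) = V(g; Γ). -/

import Mathlib

open Complex Set

/-- `WindingAlong f γ a b m` : the winding of `f` along the curve `γ : [a,b] → ℂ`
equals `m`, expressed via a continuous branch of the argument of `f ∘ γ`. -/
def WindingAlong (f : ℂ → ℂ) (γ : ℝ → ℂ) (a b : ℝ) (m : ℤ) : Prop :=
  ∃ θ : ℝ → ℝ, ContinuousOn θ (Set.Icc a b) ∧
    (∀ t ∈ Set.Icc a b,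
      f (γ t) = (‖f (γ t)‖ : ℂ) * Complex.exp (Complex.I * (θ t : ℝ))) ∧
    θ b - θ a = 2 * Real.pi * m

lemma rouche_aux (f g : ℂ → ℂ) (γ : ℝ → ℂ) (a b : ℝ)
    (hγ : ContinuousOn γ (Set.Icc a b)) (hclosed : γ a = γ b)
    (hf : ContinuousOn f (γ '' Set.Icc a b)) (hg : ContinuousOn g (γ '' Set.Icc a b))
    (hlt : ∀ z ∈ γ '' Set.Icc a b,
      ‖f z + g z‖ < ‖f z‖ + ‖g z‖)
    (m : ℤ) (H : WindingAlong g γ a b m) : WindingAlong f γ a b m := by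
  -- nonvanishing
  have hg0 : ∀ z ∈ γ '' Set.Icc a b, g z ≠ 0 := by
    intro z hz hzg
    have := hlt z hz
    rw [hzg] at this
    simp at this
  have hf0 : ∀ z ∈ γ '' Set.Icc a b, f z ≠ 0 := by
    intro z hz hzf
    have := hlt z hz
    rw [hzf] at this
    simp at this
  -- the quotient avoids the nonnegative real axis
  have hslit : ∀ z ∈ γ '' Set.Icc a b,
      0 < (-(f z / g z)).re ∨ (-(f z / g z)).im ≠ 0 := by
    intro z hz
    by_contra hcon
    push_neg at hcon
    obtain ⟨h1, h2⟩ := hcon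
    set r : ℝ := (f z / g z).re with hr
    have him : (f z / g z).im = 0 := by simpa using h2
    have hre : 0 ≤ r := by simpa [hr] using h1
    have hq : f z / g z = (r : ℂ) := Complex.ext (by simp [hr]) (by simp [him])
    have hfz : f z = (r : ℂ) * g z := by
      field_simp [hg0 z hz] at hq
      linear_combination hq
    have := hlt z hz
    rw [hfz] at this
    have e1 : (r : ℂ) * g z + g z = ((r : ℝ) + 1 : ℂ) * g z := by push_cast; ring
    rw [e1] at this
    rw [norm_mul, norm_mul] at this
    have ha1 : ‖(r : ℂ) + 1‖ = r + 1 := by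
      rw [show ((r : ℂ) + 1) = ((r + 1 : ℝ) : ℂ) by push_cast; ring, Complex.norm_real, Real.norm_eq_abs,
        _root_.abs_of_nonneg (by linarith)]
    have ha2 : ‖(r : ℂ)‖ = r := by
      rw [Complex.norm_real, Real.norm_eq_abs, _root_.abs_of_nonneg hre]
    rw [ha1, ha2] at this
    nlinarith [norm_nonneg (g z)]
  obtain ⟨θ, hθc, hθeq, hw⟩ := H
  refine ⟨fun t => θ t + (Real.pi + Complex.arg (-(f (γ t) / g (γ t)))), ?_, ?_, ?_⟩
  · apply hθc.add
    apply continuousOn_const.add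
    intro t ht
    have hmem : γ t ∈ γ '' Set.Icc a b := Set.mem_image_of_mem γ ht
    have hq : ContinuousWithinAt (fun t => f (γ t) / g (γ t)) (Set.Icc a b) t :=
      ((hf.comp hγ (Set.mapsTo_image γ _) t ht).div
        (hg.comp hγ (Set.mapsTo_image γ _) t ht) (hg0 _ hmem))
    have harg : ContinuousAt (fun s : ℂ => Complex.arg (-s)) (f (γ t) / g (γ t)) :=
      (Complex.continuousAt_arg (hslit _ hmem)).comp continuous_neg.continuousAt
    have hcomp := ContinuousAt.comp_continuousWithinAt (x := t) harg hq
    exact hcomp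
  · intro t ht
    have hmem : γ t ∈ γ '' Set.Icc a b := Set.mem_image_of_mem γ ht
    set z := f (γ t) with hzdef
    set w := g (γ t) with hwdef
    have hz0 : z ≠ 0 := hf0 _ hmem
    have hw0 : w ≠ 0 := hg0 _ hmem
    have hgw : w = (‖w‖ : ℂ) * Complex.exp (Complex.I * (θ t : ℝ)) := hθeq t ht
    set A : ℝ := Complex.arg (-(z / w)) with hA
    have key : (‖z / w‖ : ℂ) * Complex.exp ((A : ℂ) * Complex.I) = -(z / w) := by
      have := Complex.norm_mul_exp_arg_mul_I (-(z / w))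
      simpa [norm_neg] using this
    have e1 : Complex.exp (Complex.I * ((θ t + (Real.pi + A) : ℝ) : ℂ)) =
        Complex.exp (Complex.I * (θ t : ℝ)) * Complex.exp ((Real.pi : ℂ) * Complex.I) *
          Complex.exp ((A : ℂ) * Complex.I) := by
      rw [← Complex.exp_add, ← Complex.exp_add]
      congr 1
      push_cast
      ring
    have e2 : (‖z‖ : ℂ) = (‖z / w‖ : ℂ) * (‖w‖ : ℂ) := by
      have hwabs : (‖w‖ : ℂ) ≠ 0 := by
        simpa using norm_ne_zero_iff.mpr hw0
      rw [norm_div]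
      push_cast
      field_simp
    calc z = w * (z / w) := by field_simp
      _ = ((‖w‖ : ℂ) * Complex.exp (Complex.I * (θ t : ℝ))) * (z / w) := by
          rw [← hgw]
      _ = (‖z / w‖ : ℂ) * (‖w‖ : ℂ) *
            (Complex.exp (Complex.I * (θ t : ℝ)) * Complex.exp ((Real.pi : ℂ) * Complex.I) *
              Complex.exp ((A : ℂ) * Complex.I)) := by
          rw [Complex.exp_pi_mul_I]
          linear_combination ((‖w‖ : ℂ) * Complex.exp (Complex.I * ((θ t : ℝ) : ℂ))) * key
      _ = (‖z‖ : ℂ) * Complex.exp (Complex.I * ((θ t + (Real.pi + A) : ℝ) : ℂ)) := by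
          rw [e1, e2]
  · have hq : f (γ a) / g (γ a) = f (γ b) / g (γ b) := by rw [hclosed]
    show θ b + (Real.pi + (-(f (γ b) / g (γ b))).arg) -
      (θ a + (Real.pi + (-(f (γ a) / g (γ a))).arg)) = 2 * Real.pi * m
    rw [hq]
    linarith [hw]

theorem rouche_symmetric (f g : ℂ → ℂ) (γ : ℝ → ℂ) (a b : ℝ) (hab : a ≤ b)
    (hγ : ContinuousOn γ (Set.Icc a b)) (hclosed : γ a = γ b)
    (hf : ContinuousOn f (γ '' Set.Icc a b)) (hg : ContinuousOn g (γ '' Set.Icc a b))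
    (hlt : ∀ z ∈ γ '' Set.Icc a b,
      ‖f z + g z‖ < ‖f z‖ + ‖g z‖) :
    ∀ m : ℤ, WindingAlong f γ a b m ↔ WindingAlong g γ a b m := by
  have hlt' : ∀ z ∈ γ '' Set.Icc a b,
      ‖g z + f z‖ < ‖g z‖ + ‖f z‖ := by
    intro z hz
    have := hlt z hz
    rw [add_comm (g z) (f z), add_comm (‖g z‖)]
    exact this
  intro m
  constructor
  · exact rouche_aux g f γ a b hγ hclosed hg hf hlt' m
  · exact rouche_aux f g γ a b hγ hclosed hf hg hlt m
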